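/- Let f : ℝⁿ × (0,∞) → ℝⁿ satisfy ⟨x, f(x,t)⟩ ≤ −K₁(1+t)⁻¹|x|² for all x ∈ ℝⁿ and t > 0, where K₁ > 0. Let Δt > 0, let k be a nonnegative integer, and suppose z, u ∈ ℝⁿ satisfy z = f(z, (k+1)Δt)Δt + u. Then |z|² ≤ (1 − 2K₁Δt/(1 + (k+1)Δt + 2K₁Δt)) |u|². -/

import Mathlib

open scoped RealInnerProductSpace

/-- The one-step contraction estimate for the backward Euler–Maruyama method
(proof of Theorem 3.5). -/
theorem bem_one_step_contraction {n : ℕ}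
    (f : EuclideanSpace ℝ (Fin n) → ℝ → EuclideanSpace ℝ (Fin n))
    (K₁ : ℝ) (hK₁ : 0 < K₁)
    (hf : ∀ (x : EuclideanSpace ℝ (Fin n)) (t : ℝ), 0 < t →
      ⟪x, f x t⟫ ≤ -K₁ * (1 + t)⁻¹ * ‖x‖ ^ 2)
    (Δt : ℝ) (hΔt : 0 < Δt) (k : ℕ)
    (z u : EuclideanSpace ℝ (Fin n))
    (hz : z = Δt • f z (((k : ℝ) + 1) * Δt) + u) :
    ‖z‖ ^ 2 ≤
      (1 - 2 * K₁ * Δt / (1 + ((k : ℝ) + 1) * Δt + 2 * K₁ * Δt)) * ‖u‖ ^ 2 := by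
  set t : ℝ := ((k : ℝ) + 1) * Δt with ht_def
  have ht : 0 < t := by positivity
  have h1t : (0:ℝ) < 1 + t := by linarith
  have hD : (0:ℝ) < 1 + t + 2 * K₁ * Δt := by positivity
  have key : ‖z‖ ^ 2 = Δt * ⟪z, f z t⟫ + ⟪z, u⟫ := by
    calc ‖z‖ ^ 2 = ⟪z, z⟫ := (real_inner_self_eq_norm_sq z).symm
      _ = ⟪z, Δt • f z t + u⟫ := by rw [← hz]
      _ = Δt * ⟪z, f z t⟫ + ⟪z, u⟫ := by
          rw [inner_add_right, real_inner_smul_right]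
  have h1 : ⟪z, f z t⟫ ≤ -K₁ * (1 + t)⁻¹ * ‖z‖ ^ 2 := hf z t ht
  have h2 : ⟪z, u⟫ ≤ ‖z‖ * ‖u‖ := real_inner_le_norm z u
  have hs : (1 + t) * (1 + t)⁻¹ = 1 := mul_inv_cancel₀ (ne_of_gt h1t)
  have hmain : ‖z‖ ^ 2 * (1 + t + 2 * K₁ * Δt) ≤ (1 + t) * ‖u‖ ^ 2 := by
    have hza : ‖z‖ ^ 2 ≤ Δt * (-K₁ * (1 + t)⁻¹ * ‖z‖ ^ 2) + ‖z‖ * ‖u‖ := by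
      have := mul_le_mul_of_nonneg_left h1 hΔt.le
      linarith [key]
    have hsimp : (1 + t) * (Δt * (-K₁ * (1 + t)⁻¹ * ‖z‖ ^ 2) + ‖z‖ * ‖u‖)
        = -(K₁ * Δt * ‖z‖ ^ 2) + (1 + t) * (‖z‖ * ‖u‖) := by
      field_simp
    have h3 : (1 + t) * ‖z‖ ^ 2 + K₁ * Δt * ‖z‖ ^ 2 ≤ (1 + t) * (‖z‖ * ‖u‖) := by
      have := mul_le_mul_of_nonneg_left hza h1t.le
      rw [hsimp] at this
      linarith
    nlinarith [sq_nonneg (‖z‖ - ‖u‖), mul_pos hK₁ hΔt, sq_nonneg ‖z‖]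
  have hgoal : (1 - 2 * K₁ * Δt / (1 + t + 2 * K₁ * Δt)) = (1 + t) / (1 + t + 2 * K₁ * Δt) := by
    field_simp
    ring
  rw [hgoal, div_mul_eq_mul_div, le_div_iff₀ hD]
  linarith [hmain]
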